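/- For q ∈ ℝ^K and λ > 0, the derivative with respect to λ of g(λ) = λ · log((1/K) ∑_k exp(q_k/λ)) is g′(λ) = −KL(p(λ), 1/K), where p(λ)_k = exp(q_k/λ)/∑_j exp(q_j/λ) and KL(p, 1/K) = ∑_k p_k log(K p_k). In particular g′(λ) ≤ 0, with equality iff q has all equal entries, confirming monotonicity of the LDR-KL loss in λ. -/

import Mathlib

/-- The derivative in λ of `g(λ) = λ log((1/K) ∑ exp(q_k/λ))` is `−KL(p(λ), 1/K)` where
`p(λ)` is the softmax of `q` at temperature λ; this derivative is ≤ 0, with equality iff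
all entries of `q` are equal. -/
theorem ldr_kl_deriv_is_neg_kl (K : ℕ) (hK : 0 < K) (q : Fin K → ℝ)
    (lam : ℝ) (hlam : 0 < lam)
    (p : Fin K → ℝ)
    (hp : p = fun k => Real.exp (q k / lam) / ∑ j : Fin K, Real.exp (q j / lam)) :
    HasDerivAt
      (fun l : ℝ => l * Real.log ((1 / (K : ℝ)) * ∑ k : Fin K, Real.exp (q k / l)))
      (-(∑ k : Fin K, p k * Real.log ((K : ℝ) * p k))) lam ∧
    (-(∑ k : Fin K, p k * Real.log ((K : ℝ) * p k)) ≤ 0) ∧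
    ((-(∑ k : Fin K, p k * Real.log ((K : ℝ) * p k)) = 0) ↔ ∀ i j : Fin K, q i = q j) := by
  have hK0 : (0:ℝ) < K := Nat.cast_pos.mpr hK
  have hlamne : lam ≠ 0 := ne_of_gt hlam
  set S : ℝ := ∑ j : Fin K, Real.exp (q j / lam) with hSdef
  have hSpos : 0 < S := Finset.sum_pos (fun j _ => Real.exp_pos _)
    ⟨⟨0, hK⟩, Finset.mem_univ _⟩
  have hppos : ∀ k, 0 < p k := by
    intro k; rw [hp]; exact div_pos (Real.exp_pos _) hSpos
  have hpsum : ∑ k, p k = 1 := by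
    rw [hp]
    simp only
    rw [← Finset.sum_div, ← hSdef, div_self (ne_of_gt hSpos)]
  have hexpS : ∀ k, Real.exp (q k / lam) = p k * S := by
    intro k; rw [hp]; field_simp
  -- the value of the sum of p_k log(K p_k)
  have hlogterm : ∀ k, Real.log ((K:ℝ) * p k) = Real.log K + q k / lam - Real.log S := by
    intro k
    rw [hp]
    simp only
    rw [Real.log_mul (ne_of_gt hK0) (ne_of_gt (div_pos (Real.exp_pos _) hSpos)),
      Real.log_div (ne_of_gt (Real.exp_pos _)) (ne_of_gt hSpos), Real.log_exp]
    ring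
  have hKL : ∑ k, p k * Real.log ((K:ℝ) * p k)
      = (Real.log K - Real.log S) + (∑ k, p k * q k) / lam := by
    calc ∑ k, p k * Real.log ((K:ℝ) * p k)
        = ∑ k, (p k * (Real.log K - Real.log S) + p k * q k / lam) := by
          refine Finset.sum_congr rfl fun k _ => ?_
          rw [hlogterm k]; ring
      _ = (∑ k, p k) * (Real.log K - Real.log S) + (∑ k, p k * q k) / lam := by
          rw [Finset.sum_add_distrib, ← Finset.sum_mul, ← Finset.sum_div]
      _ = (Real.log K - Real.log S) + (∑ k, p k * q k) / lam := by
          rw [hpsum, one_mul]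
  -- derivative
  have hderiv : HasDerivAt
      (fun l : ℝ => l * Real.log ((1 / (K : ℝ)) * ∑ k : Fin K, Real.exp (q k / l)))
      (-(∑ k : Fin K, p k * Real.log ((K : ℝ) * p k))) lam := by
    have hek : ∀ k : Fin K, HasDerivAt (fun l : ℝ => Real.exp (q k / l))
        (Real.exp (q k / lam) * (q k * -(lam ^ 2)⁻¹)) lam := by
      intro k
      have h1 : HasDerivAt (fun l : ℝ => q k / l) (q k * -(lam ^ 2)⁻¹) lam := by
        simpa [div_eq_mul_inv] using (hasDerivAt_inv hlamne).const_mul (q k)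
      exact h1.exp
    have hsum : HasDerivAt (fun l : ℝ => ∑ k : Fin K, Real.exp (q k / l))
        (∑ k : Fin K, Real.exp (q k / lam) * (q k * -(lam ^ 2)⁻¹)) lam :=
      HasDerivAt.fun_sum (fun k _ => hek k)
    have hin : HasDerivAt (fun l : ℝ => (1 / (K:ℝ)) * ∑ k : Fin K, Real.exp (q k / l))
        ((1 / (K:ℝ)) * ∑ k : Fin K, Real.exp (q k / lam) * (q k * -(lam ^ 2)⁻¹)) lam :=
      hsum.const_mul _
    have hne : (1 / (K:ℝ)) * S ≠ 0 :=
      ne_of_gt (mul_pos (by positivity) hSpos)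
    have hlog : HasDerivAt (fun l : ℝ => Real.log ((1 / (K:ℝ)) * ∑ k : Fin K, Real.exp (q k / l)))
        (((1 / (K:ℝ)) * ∑ k : Fin K, Real.exp (q k / lam) * (q k * -(lam ^ 2)⁻¹)) / ((1 / (K:ℝ)) * S))
        lam := hin.log hne
    have hmul := (hasDerivAt_id lam).mul hlog
    have hT : ∑ k : Fin K, Real.exp (q k / lam) * (q k * -(lam ^ 2)⁻¹)
        = (S * -(lam ^ 2)⁻¹) * ∑ k, p k * q k := by
      rw [Finset.mul_sum]
      refine Finset.sum_congr rfl fun k _ => ?_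
      rw [hexpS k]; ring
    have hval : 1 * Real.log ((1 / (K:ℝ)) * S)
        + lam * (((1 / (K:ℝ)) * ∑ k : Fin K, Real.exp (q k / lam) * (q k * -(lam ^ 2)⁻¹)) / ((1 / (K:ℝ)) * S))
        = -(∑ k : Fin K, p k * Real.log ((K : ℝ) * p k)) := by
      rw [hT, hKL, Real.log_mul (by positivity) (ne_of_gt hSpos), Real.log_div one_ne_zero (ne_of_gt hK0),
        Real.log_one]
      field_simp
      ring
    rw [← hval]
    exact hmul
  -- lower bound terms
  have hxpos : ∀ k : Fin K, 0 < (K:ℝ) * p k := fun k => mul_pos hK0 (hppos k)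
  have hge : ∀ k : Fin K, p k - 1 / (K:ℝ) ≤ p k * Real.log ((K:ℝ) * p k) := by
    intro k
    have h1 : Real.log (((K:ℝ) * p k)⁻¹) ≤ ((K:ℝ) * p k)⁻¹ - 1 :=
      Real.log_le_sub_one_of_pos (inv_pos.mpr (mul_pos hK0 (hppos k)))
    rw [Real.log_inv] at h1
    have h2 : 1 - ((K:ℝ) * p k)⁻¹ ≤ Real.log ((K:ℝ) * p k) := by linarith
    have h3 := mul_le_mul_of_nonneg_left h2 (hppos k).le
    have h4 : p k * (1 - ((K:ℝ) * p k)⁻¹) = p k - 1 / K := by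
      field_simp [ne_of_gt (hppos k), ne_of_gt hK0]
    linarith
  have hsum0 : ∑ k : Fin K, (p k - 1 / (K:ℝ)) = 0 := by
    rw [Finset.sum_sub_distrib, hpsum, Finset.sum_const, Finset.card_univ, Fintype.card_fin]
    rw [nsmul_eq_mul, mul_one_div, div_self (ne_of_gt hK0), sub_self]
  have hKLnonneg : 0 ≤ ∑ k : Fin K, p k * Real.log ((K:ℝ) * p k) := by
    calc (0:ℝ) = ∑ k : Fin K, (p k - 1 / (K:ℝ)) := hsum0.symm
      _ ≤ ∑ k : Fin K, p k * Real.log ((K:ℝ) * p k) :=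
        Finset.sum_le_sum fun k _ => hge k
  refine ⟨hderiv, by linarith, ?_, ?_⟩
  · -- forward
    intro h0
    have hKL0 : ∑ k : Fin K, p k * Real.log ((K:ℝ) * p k) = 0 := by linarith
    have hf0 : ∑ k : Fin K, (p k * Real.log ((K:ℝ) * p k) - (p k - 1 / (K:ℝ))) = 0 := by
      rw [Finset.sum_sub_distrib, hKL0, hsum0, sub_zero]
    have heach := (Finset.sum_eq_zero_iff_of_nonneg
      (fun k _ => by linarith [hge k])).mp hf0
    have hpk : ∀ k : Fin K, (K:ℝ) * p k = 1 := by
      intro k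
      by_contra hne1
      have hstrict : Real.log (((K:ℝ) * p k)⁻¹) < ((K:ℝ) * p k)⁻¹ - 1 :=
        Real.log_lt_sub_one_of_pos (inv_pos.mpr (mul_pos hK0 (hppos k))) (by
          intro h; apply hne1
          have := congrArg (·⁻¹) h
          simpa using this)
      rw [Real.log_inv] at hstrict
      have h2 : 1 - ((K:ℝ) * p k)⁻¹ < Real.log ((K:ℝ) * p k) := by linarith
      have h3 := mul_lt_mul_of_pos_left h2 (hppos k)
      have h4 : p k * (1 - ((K:ℝ) * p k)⁻¹) = p k - 1 / K := by
        field_simp [ne_of_gt (hppos k), ne_of_gt hK0]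
      have h5 := heach k (Finset.mem_univ k)
      nlinarith
    intro i j
    have hi : p i = p j := by
      have h1 := hpk i; have h2 := hpk j
      exact mul_left_cancel₀ (ne_of_gt hK0) (h1.trans h2.symm)
    have : Real.exp (q i / lam) = Real.exp (q j / lam) := by
      rw [hexpS i, hexpS j, hi]
    have := Real.exp_eq_exp.mp this
    field_simp at this
    exact this
  · -- backward
    intro hq
    have hpk : ∀ k : Fin K, p k = 1 / K := by
      intro k
      rw [hp]
      simp only
      have hS' : S = K * Real.exp (q k / lam) := by
        rw [hSdef]
        rw [Finset.sum_congr rfl fun j _ => by rw [hq j k]]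
        simp [Finset.card_univ, mul_comm]
      rw [hS']
      rw [div_eq_div_iff (by positivity) (ne_of_gt hK0)]
      ring
    have : ∀ k : Fin K, p k * Real.log ((K:ℝ) * p k) = 0 := by
      intro k
      rw [hpk k]
      rw [mul_one_div, div_self (ne_of_gt hK0), Real.log_one, mul_zero]
    rw [Finset.sum_congr rfl fun k _ => this k]
    simp
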